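/- If w ∈ ℝ^{n+1} satisfies wᵀ X̃* w < 0 for a symmetric matrix X̃*, and S is the support of w, then the principal submatrix X̃*_[S] has a negative eigenvalue, and its eigenvector w̄ corresponding to the most negative eigenvalue, zero-padded to ℝ^{n+1}, gives a cut at least as violated: the padded vector v̄ satisfies v̄ᵀ X̃* v̄ ≤ (wᵀ X̃* w)·(‖w restricted to S‖²)⁻¹·‖w̄‖² when w̄ is unit norm, in particular v̄ᵀ X̃* v̄ < 0. -/

import Mathlib

open Matrix

private lemma quad_restrict {m : Type*} [Fintype m] [DecidableEq m]
    (M : Matrix m m ℝ) (S : Finset m) (x : m → ℝ) (hx : ∀ i ∉ S, x i = 0) :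
    x ⬝ᵥ M *ᵥ x
      = (fun i : {i // i ∈ S} => x i.val) ⬝ᵥ
        (M.submatrix (Subtype.val : {i // i ∈ S} → m) Subtype.val) *ᵥ
        (fun i : {i // i ∈ S} => x i.val) := by
  simp only [dotProduct, mulVec, submatrix_apply]
  rw [Finset.sum_coe_sort S (fun i => x i * ∑ j : {i // i ∈ S}, M i j.val * x j.val)]
  rw [← Finset.sum_subset (Finset.subset_univ S) (by
    intro i _ hi
    rw [hx i hi, zero_mul])]
  refine Finset.sum_congr rfl fun i hi => ?_
  congr 1
  rw [Finset.sum_coe_sort S (fun j => M i j * x j)]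
  rw [← Finset.sum_subset (Finset.subset_univ S) (by
    intro j _ hj
    rw [hx j hj, mul_zero])]

private lemma dot_restrict {m : Type*} [Fintype m] [DecidableEq m]
    (S : Finset m) (x : m → ℝ) (hx : ∀ i ∉ S, x i = 0) :
    x ⬝ᵥ x = (fun i : {i // i ∈ S} => x i.val) ⬝ᵥ (fun i : {i // i ∈ S} => x i.val) := by
  simp only [dotProduct]
  rw [Finset.sum_coe_sort S (fun i => x i * x i)]
  rw [← Finset.sum_subset (Finset.subset_univ S) (by
    intro i _ hi
    rw [hx i hi, zero_mul])]

/-- SPARSE2 variant: if `wᵀ X̃* w < 0` and `S` is the support of `w`, then the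
principal submatrix `X̃*_[S]` has a negative eigenvalue; moreover, the zero-padded
unit eigenvector `w̄` for its most negative eigenvalue gives a cut at least as
violated: `v̄ᵀ X̃* v̄ ≤ (wᵀ X̃* w)/‖w‖² < 0`. -/
theorem sparse2_eigenvector_cut (n : ℕ)
    (Xs : Matrix (Fin (n + 1)) (Fin (n + 1)) ℝ) (hXs : Xs.IsSymm)
    (w : Fin (n + 1) → ℝ) (hw : w ⬝ᵥ Xs *ᵥ w < 0)
    (S : Finset (Fin (n + 1))) (hS : ∀ i : Fin (n + 1), i ∈ S ↔ w i ≠ 0) :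
    (∃ (mu : ℝ) (u : {i // i ∈ S} → ℝ), u ≠ 0 ∧
        (Xs.submatrix (Subtype.val : {i // i ∈ S} → Fin (n + 1)) Subtype.val) *ᵥ u
          = mu • u ∧ mu < 0) ∧
      ∀ (lmin : ℝ) (wbar : {i // i ∈ S} → ℝ),
        (Xs.submatrix (Subtype.val : {i // i ∈ S} → Fin (n + 1)) Subtype.val) *ᵥ wbar
            = lmin • wbar →
        wbar ⬝ᵥ wbar = 1 →
        (∀ (mu : ℝ) (u : {i // i ∈ S} → ℝ), u ≠ 0 →
          (Xs.submatrix (Subtype.val : {i // i ∈ S} → Fin (n + 1)) Subtype.val) *ᵥ u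
            = mu • u → lmin ≤ mu) →
        ∀ vbar : Fin (n + 1) → ℝ,
          (∀ i : Fin (n + 1), vbar i = if h : i ∈ S then wbar ⟨i, h⟩ else 0) →
          vbar ⬝ᵥ Xs *ᵥ vbar ≤ (w ⬝ᵥ Xs *ᵥ w) / (w ⬝ᵥ w) ∧
            vbar ⬝ᵥ Xs *ᵥ vbar < 0 := by
  classical
  set A := Xs.submatrix (Subtype.val : {i // i ∈ S} → Fin (n + 1)) Subtype.val with hA_def
  have hAsymm : A.IsSymm := hXs.submatrix _
  have hA : A.IsHermitian := by
    rwa [Matrix.IsHermitian, conjTranspose_eq_transpose_of_trivial]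
  have hw_supp : ∀ i ∉ S, w i = 0 := fun i hi => by
    by_contra h; exact hi ((hS i).mpr h)
  set wS : {i // i ∈ S} → ℝ := fun i => w i.val with hwS_def
  have hquadw : w ⬝ᵥ Xs *ᵥ w = wS ⬝ᵥ A *ᵥ wS := quad_restrict Xs S w hw_supp
  have hdotw : w ⬝ᵥ w = wS ⬝ᵥ wS := dot_restrict S w hw_supp
  have hwne : w ≠ 0 := by
    rintro rfl
    simp [dotProduct] at hw
  have hwdotpos : 0 < w ⬝ᵥ w := by
    rcases lt_or_eq_of_le (Finset.sum_nonneg fun i _ => mul_self_nonneg (w i)) with h | h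
    · exact h
    · exact absurd (dotProduct_self_eq_zero.mp h.symm) hwne
  constructor
  · -- existence of a negative eigenvalue with eigenvector
    by_cases hEx : ∃ i, hA.eigenvalues i < 0
    · obtain ⟨i, hi⟩ := hEx
      refine ⟨hA.eigenvalues i, hA.eigenvectorBasis i, ?_, ?_, hi⟩
      · exact fun h => hA.eigenvectorBasis.orthonormal.ne_zero i (by
          ext j; exact congrFun h j)
      · exact hA.mulVec_eigenvectorBasis i
    · push_neg at hEx
      have hpsd : A.PosSemidef := hA.posSemidef_iff_eigenvalues_nonneg.mpr (fun i => hEx i)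
      have := hpsd.dotProduct_mulVec_nonneg wS
      rw [star_trivial] at this
      rw [hquadw] at hw
      exact absurd this (not_le.mpr hw)
  · intro lmin wbar hwbar hwunit hmin vbar hvbar
    have hvbar_supp : ∀ i ∉ S, vbar i = 0 := fun i hi => by
      rw [hvbar i, dif_neg hi]
    have hvbar_restrict : (fun i : {i // i ∈ S} => vbar i.val) = wbar := by
      funext i
      rw [hvbar i.val, dif_pos i.2]
    have hquadv : vbar ⬝ᵥ Xs *ᵥ vbar = lmin := by
      rw [quad_restrict Xs S vbar hvbar_supp, hvbar_restrict, hwbar,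
        dotProduct_smul, hwunit, smul_eq_mul, mul_one]
    -- A - lmin • 1 is PosSemidef
    set B : Matrix {i // i ∈ S} {i // i ∈ S} ℝ := A - lmin • 1 with hB_def
    have hBh : B.IsHermitian := hA.sub (by simp [Matrix.IsHermitian])
    have hBnn : ∀ i, 0 ≤ hBh.eigenvalues i := by
      intro i
      have hvne : (⇑(hBh.eigenvectorBasis i) : {i // i ∈ S} → ℝ) ≠ 0 := fun h =>
        hBh.eigenvectorBasis.orthonormal.ne_zero i (by ext j; exact congrFun h j)
      have hBv := hBh.mulVec_eigenvectorBasis i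
      have hAv : A *ᵥ ⇑(hBh.eigenvectorBasis i)
          = (hBh.eigenvalues i + lmin) • ⇑(hBh.eigenvectorBasis i) := by
        have : A = B + lmin • 1 := by rw [hB_def]; abel
        rw [this, add_mulVec, hBv, smul_mulVec, one_mulVec, add_smul]
      have := hmin (hBh.eigenvalues i + lmin) _ hvne hAv
      linarith
    have hBpsd : B.PosSemidef := hBh.posSemidef_iff_eigenvalues_nonneg.mpr hBnn
    have hray : lmin * (wS ⬝ᵥ wS) ≤ wS ⬝ᵥ A *ᵥ wS := by
      have := hBpsd.dotProduct_mulVec_nonneg wS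
      rw [star_trivial, hB_def, sub_mulVec, smul_mulVec, one_mulVec,
        dotProduct_sub, dotProduct_smul, smul_eq_mul, sub_nonneg] at this
      exact this
    have hkey : lmin ≤ (w ⬝ᵥ Xs *ᵥ w) / (w ⬝ᵥ w) := by
      rw [le_div_iff₀ hwdotpos, hquadw, hdotw]
      exact hray
    refine ⟨by rw [hquadv]; exact hkey, ?_⟩
    rw [hquadv]
    calc lmin ≤ (w ⬝ᵥ Xs *ᵥ w) / (w ⬝ᵥ w) := hkey
      _ < 0 := div_neg_of_neg_of_pos hw hwdotpos
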